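/- Fix α ∈ (0,1) and θ > −α. Define φ_n := Γ(1+θ)Γ(n+α+θ) / (Γ(1+θ+α)Γ(n+θ)) for n ≥ 1. Then for all integers j ≥ 1, 1/φ_j ≤ 2Γ(1+θ+α)/(Γ(1+θ)·(j+θ)^α). -/

import Mathlib

open Real

noncomputable def phi (α θ : ℝ) (n : ℕ) : ℝ :=
  Real.Gamma (1 + θ) * Real.Gamma ((n : ℝ) + α + θ) /
    (Real.Gamma (1 + θ + α) * Real.Gamma ((n : ℝ) + θ))

lemma aux_half_le_rpow_self {u : ℝ} (hu0 : 0 < u) (hu1 : u < 1) :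
    (1 : ℝ) / 2 ≤ u ^ u := by
  have hs : 0 < Real.sqrt u := Real.sqrt_pos.2 hu0
  have hlog : Real.log (Real.sqrt u)⁻¹ ≤ (Real.sqrt u)⁻¹ - 1 :=
    Real.log_le_sub_one_of_pos (by positivity)
  rw [Real.log_inv] at hlog
  have hlogu : Real.log u = 2 * Real.log (Real.sqrt u) := by
    rw [Real.log_sqrt hu0.le]; ring
  have hsq : Real.sqrt u * Real.sqrt u = u := Real.mul_self_sqrt hu0.le
  have h1 : -(1/2 : ℝ) ≤ u * Real.log u := by
    have h2 : 1 - (Real.sqrt u)⁻¹ ≤ Real.log (Real.sqrt u) := by linarith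
    have h3 : u * (1 - (Real.sqrt u)⁻¹) ≤ u * Real.log (Real.sqrt u) :=
      mul_le_mul_of_nonneg_left h2 hu0.le
    have h4 : u * (Real.sqrt u)⁻¹ = Real.sqrt u := by
      field_simp
      rw [Real.sq_sqrt hu0.le]
    have h5 : (Real.sqrt u - 1/2)^2 ≥ 0 := sq_nonneg _
    nlinarith [h3, h4, hsq]
  rw [Real.rpow_def_of_pos hu0]
  have hl2 : (1/2 : ℝ) ≤ Real.log 2 := by
    have := Real.log_two_gt_d9; linarith
  calc (1:ℝ)/2 = Real.exp (Real.log (1/2)) := by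
        rw [Real.exp_log]; norm_num
    _ ≤ Real.exp (Real.log u * u) := by
        apply Real.exp_le_exp.2
        rw [show (1:ℝ)/2 = 2⁻¹ by norm_num, Real.log_inv]
        nlinarith [h1]

lemma gamma_key {x α : ℝ} (hx : 0 < x) (hα0 : 0 < α) (hα1 : α < 1) :
    Real.Gamma (x + 1) ≤ Real.Gamma (x + α) * (x + α) ^ (1 - α) := by
  have hxα : 0 < x + α := by linarith
  have hxα1 : 0 < x + α + 1 := by linarith
  have hb : 0 < 1 - α := by linarith
  have key := Real.Gamma_mul_add_mul_le_rpow_Gamma_mul_rpow_Gamma hxα hxα1 hα0 hb (by ring)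
  have heq : α * (x + α) + (1 - α) * (x + α + 1) = x + 1 := by ring
  rw [heq] at key
  have hG : 0 < Real.Gamma (x + α) := Real.Gamma_pos_of_pos hxα
  rw [Real.Gamma_add_one hxα.ne'] at key
  calc Real.Gamma (x + 1)
      ≤ Real.Gamma (x + α) ^ α * ((x + α) * Real.Gamma (x + α)) ^ (1 - α) := key
    _ = Real.Gamma (x + α) * (x + α) ^ (1 - α) := by
        rw [Real.mul_rpow hxα.le hG.le, ← mul_assoc,
          mul_comm (Real.Gamma (x + α) ^ α) ((x + α) ^ (1 - α)), mul_assoc,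
          ← Real.rpow_add hG]
        norm_num [mul_comm]

lemma gamma_ratio {x α : ℝ} (hx : 1 - α < x) (hα0 : 0 < α) (hα1 : α < 1) :
    Real.Gamma x * x ^ α ≤ 2 * Real.Gamma (x + α) := by
  have hb : 0 < 1 - α := by linarith
  have hx0 : 0 < x := by linarith
  have hkey := gamma_key hx0 hα0 hα1
  have hΓ1 : Real.Gamma (x + 1) = x * Real.Gamma x := Real.Gamma_add_one hx0.ne'
  have hxα : 0 < x + α := by linarith
  -- (x+α)^(1-α) ≤ 2 * x^(1-α)
  have hcmp : x + α ≤ x / (1 - α) := by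
    rw [le_div_iff₀ hb]; nlinarith
  have h2 : (x + α) ^ (1 - α) ≤ (x / (1 - α)) ^ (1 - α) :=
    Real.rpow_le_rpow hxα.le hcmp hb.le
  have h3 : (x / (1 - α)) ^ (1 - α) = x ^ (1 - α) / (1 - α) ^ (1 - α) :=
    Real.div_rpow hx0.le hb.le _
  have h4 : (1 : ℝ) / 2 ≤ (1 - α) ^ (1 - α) := aux_half_le_rpow_self hb (by linarith)
  have h5 : (x / (1 - α)) ^ (1 - α) ≤ 2 * x ^ (1 - α) := by
    rw [h3, div_le_iff₀ (by positivity : (0:ℝ) < (1 - α) ^ (1 - α))]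
    have hxp : (0:ℝ) ≤ x ^ (1 - α) := (Real.rpow_pos_of_pos hx0 _).le
    nlinarith [mul_le_mul_of_nonneg_left h4 hxp]
  have h6 : (x + α) ^ (1 - α) ≤ 2 * x ^ (1 - α) := h2.trans h5
  have hΓpos : 0 < Real.Gamma (x + α) := Real.Gamma_pos_of_pos hxα
  -- combine: Γ(x) * x^α = Γ(x+1) * x^(α-1)
  have hxsplit : x ^ α = x ^ (α - 1) * x := by
    rw [← Real.rpow_add_one hx0.ne']; ring_nf
  have hxinv : x ^ (1 - α) * x ^ (α - 1) = 1 := by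
    rw [← Real.rpow_add hx0]; norm_num
  have hxm1 : (0:ℝ) < x ^ (α - 1) := Real.rpow_pos_of_pos hx0 _
  calc Real.Gamma x * x ^ α = Real.Gamma (x + 1) * x ^ (α - 1) := by
        rw [hΓ1, hxsplit]; ring
    _ ≤ (Real.Gamma (x + α) * (x + α) ^ (1 - α)) * x ^ (α - 1) :=
        mul_le_mul_of_nonneg_right hkey hxm1.le
    _ ≤ (Real.Gamma (x + α) * (2 * x ^ (1 - α))) * x ^ (α - 1) := by
        apply mul_le_mul_of_nonneg_right _ hxm1.le
        exact mul_le_mul_of_nonneg_left h6 hΓpos.le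
    _ = 2 * Real.Gamma (x + α) * (x ^ (1 - α) * x ^ (α - 1)) := by ring
    _ = 2 * Real.Gamma (x + α) := by rw [hxinv, mul_one]

theorem one_div_phi_le (α θ : ℝ) (hα0 : 0 < α) (hα1 : α < 1) (hθ : -α < θ)
    (j : ℕ) (hj : 1 ≤ j) :
    1 / phi α θ j ≤ 2 * Real.Gamma (1 + θ + α) / (Real.Gamma (1 + θ) * ((j : ℝ) + θ) ^ α) := by
  have hj1 : (1:ℝ) ≤ (j:ℝ) := by exact_mod_cast hj
  set x : ℝ := (j : ℝ) + θ with hxdef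
  have hx : 1 - α < x := by simp only [hxdef]; linarith
  have hx0 : 0 < x := by linarith
  have hxα : 0 < x + α := by linarith
  have hA : 0 < Real.Gamma (1 + θ) := Real.Gamma_pos_of_pos (by linarith)
  have hB : 0 < Real.Gamma (1 + θ + α) := Real.Gamma_pos_of_pos (by linarith)
  have hG : 0 < Real.Gamma x := Real.Gamma_pos_of_pos hx0
  have hH : 0 < Real.Gamma (x + α) := Real.Gamma_pos_of_pos hxα
  have hxp : 0 < x ^ α := Real.rpow_pos_of_pos hx0 _
  have hrewr : (j : ℝ) + α + θ = x + α := by rw [hxdef]; ring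
  have hphi : phi α θ j = Real.Gamma (1 + θ) * Real.Gamma (x + α) /
      (Real.Gamma (1 + θ + α) * Real.Gamma x) := by
    rw [phi, hrewr]
  rw [hphi, one_div_div, div_le_div_iff₀ (by positivity) (by positivity)]
  have key := gamma_ratio hx hα0 hα1
  calc Real.Gamma (1 + θ + α) * Real.Gamma x * (Real.Gamma (1 + θ) * x ^ α)
      = (Real.Gamma (1 + θ) * Real.Gamma (1 + θ + α)) * (Real.Gamma x * x ^ α) := by ring
    _ ≤ (Real.Gamma (1 + θ) * Real.Gamma (1 + θ + α)) * (2 * Real.Gamma (x + α)) :=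
        mul_le_mul_of_nonneg_left key (by positivity)
    _ = 2 * Real.Gamma (1 + θ + α) * (Real.Gamma (1 + θ) * Real.Gamma (x + α)) := by ring
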